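/- Let h = ∑_{i=0}^ℓ c_i. Suppose a, a' ∈ L^{ℓ+1} satisfy Δ(a) ≠ 0 and Δ(a') ≠ 0, and let u ∈ Lˣ. Then there exists t ∈ (Lˣ)^ℓ with t · a = u a' (where u a' denotes coordinatewise scalar multiplication of a' by u) if and only if Δ(a) · Δ(a')^{-1} = u^h. -/

import Mathlib

/-- The action of the torus `T = (Lˣ)^ℓ` on `L^{ℓ+1}`:
`t · (a_0, a_1, …, a_ℓ) = ((∏_{i=1}^ℓ t_i^{c_i}) a_0, t_1⁻¹ a_1, …, t_ℓ⁻¹ a_ℓ)`. -/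
def torusAct {L : Type*} [Field L] {ℓ : ℕ} (c : Fin (ℓ + 1) → ℕ)
    (t : Fin ℓ → Lˣ) (a : Fin (ℓ + 1) → L) : Fin (ℓ + 1) → L :=
  Fin.cons ((∏ i : Fin ℓ, (t i : L) ^ c i.succ) * a 0)
    (fun i : Fin ℓ => ((t i : L))⁻¹ * a i.succ)

/-- The invariant polynomial `Δ(a_0, …, a_ℓ) = ∏_{i=0}^ℓ a_i^{c_i}`. -/
def Delta {L : Type*} [Field L] {ℓ : ℕ} (c : Fin (ℓ + 1) → ℕ)
    (a : Fin (ℓ + 1) → L) : L :=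
  ∏ i : Fin (ℓ + 1), a i ^ c i

/-- For stable vectors `a, a'` and a unit `u`, there is a torus element taking
`a` to `u • a'` if and only if `Δ(a) Δ(a')⁻¹ = u^h`, where `h = ∑ c_i` is the
Coxeter number. -/
theorem orbit_scaled_iff_delta_ratio {L : Type*} [Field L] {ℓ : ℕ} (hℓ : 1 ≤ ℓ)
    (c : Fin (ℓ + 1) → ℕ) (hc0 : c 0 = 1) (hcpos : ∀ i, 0 < c i)
    (a a' : Fin (ℓ + 1) → L) (ha : Delta c a ≠ 0) (ha' : Delta c a' ≠ 0)
    (u : Lˣ) :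
    (∃ t : Fin ℓ → Lˣ, torusAct c t a = fun i => (u : L) * a' i) ↔
      Delta c a * (Delta c a')⁻¹ = (u : L) ^ (∑ i : Fin (ℓ + 1), c i) := by
  have hne : ∀ i, a i ≠ 0 := by
    intro i hz
    exact ha (Finset.prod_eq_zero (Finset.mem_univ i)
      (by simp [hz, pow_eq_zero_iff (hcpos i).ne']))
  have hne' : ∀ i, a' i ≠ 0 := by
    intro i hz
    exact ha' (Finset.prod_eq_zero (Finset.mem_univ i)
      (by simp [hz, pow_eq_zero_iff (hcpos i).ne']))
  have hDa : Delta c a = a 0 * ∏ i : Fin ℓ, a i.succ ^ c i.succ := by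
    unfold Delta; rw [Fin.prod_univ_succ, hc0, pow_one]
  have hDa' : Delta c a' = a' 0 * ∏ i : Fin ℓ, a' i.succ ^ c i.succ := by
    unfold Delta; rw [Fin.prod_univ_succ, hc0, pow_one]
  have hsum : (∑ i : Fin (ℓ + 1), c i) = 1 + ∑ i : Fin ℓ, c i.succ := by
    rw [Fin.sum_univ_succ, hc0]
  have hP' : (∏ i : Fin ℓ, a' i.succ ^ c i.succ) ≠ 0 :=
    Finset.prod_ne_zero_iff.mpr fun i _ => pow_ne_zero _ (hne' _)
  constructor
  · rintro ⟨t, ht⟩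
    have h1 : Delta c (torusAct c t a) = Delta c a := by
      unfold Delta torusAct
      rw [Fin.prod_univ_succ, Fin.prod_univ_succ]
      simp only [Fin.cons_zero, Fin.cons_succ, hc0, pow_one, mul_pow]
      rw [Finset.prod_mul_distrib]
      have hinv : ∏ i : Fin ℓ, ((t i : L))⁻¹ ^ c i.succ
          = (∏ i : Fin ℓ, (t i : L) ^ c i.succ)⁻¹ := by
        rw [← Finset.prod_inv_distrib]
        exact Finset.prod_congr rfl fun i _ => inv_pow _ _
      rw [hinv]
      have hPt : (∏ i : Fin ℓ, (t i : L) ^ c i.succ) ≠ 0 :=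
        Finset.prod_ne_zero_iff.mpr fun i _ => pow_ne_zero _ (Units.ne_zero _)
      field_simp
    have h2 : Delta c (fun i => (u : L) * a' i)
        = (u : L) ^ (∑ i : Fin (ℓ + 1), c i) * Delta c a' := by
      unfold Delta
      rw [← Finset.prod_pow_eq_pow_sum, ← Finset.prod_mul_distrib]
      exact Finset.prod_congr rfl fun i _ => (mul_pow _ _ _)
    rw [ht, h2] at h1
    field_simp [h1.symm]
    rw [← h1]; ring
  · intro hΔ
    have hs : Delta c a = (u : L) ^ (∑ i : Fin (ℓ + 1), c i) * Delta c a' := by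
      field_simp at hΔ
      linear_combination hΔ
    refine ⟨fun i => Units.mk0 (a i.succ) (hne _) * (u * Units.mk0 (a' i.succ) (hne' _))⁻¹, ?_⟩
    funext j
    refine Fin.cases ?_ ?_ j
    · show (∏ i : Fin ℓ, ((Units.mk0 (a i.succ) (hne _) * (u * Units.mk0 (a' i.succ) (hne' _))⁻¹ : Lˣ) : L) ^ c i.succ) * a 0 = (u : L) * a' 0
      have hval : ∀ i : Fin ℓ,
          ((Units.mk0 (a i.succ) (hne _) * (u * Units.mk0 (a' i.succ) (hne' _))⁻¹ : Lˣ) : L)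
          = a i.succ * ((u : L) * a' i.succ)⁻¹ := by intro i; simp
      rw [Finset.prod_congr rfl fun i _ => by rw [hval i]]
      simp only [mul_pow, mul_inv, inv_pow]
      rw [Finset.prod_mul_distrib, Finset.prod_mul_distrib]
      have e1 : (∏ x : Fin ℓ, ((u : L) ^ c x.succ)⁻¹)
          = ((u : L) ^ (∑ i : Fin ℓ, c i.succ))⁻¹ := by
        simp [← inv_pow, Finset.prod_pow_eq_pow_sum]
      have e2 : (∏ x : Fin ℓ, (a' x.succ ^ c x.succ)⁻¹)
          = (∏ x : Fin ℓ, a' x.succ ^ c x.succ)⁻¹ := by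
        rw [← Finset.prod_inv_distrib]
      have key : a 0 * ∏ i : Fin ℓ, a i.succ ^ c i.succ
          = (u : L) ^ (1 + ∑ i : Fin ℓ, c i.succ)
            * (a' 0 * ∏ i : Fin ℓ, a' i.succ ^ c i.succ) := by
        rw [← hDa, ← hDa', ← hsum]; exact hs
      rw [e1, e2]
      field_simp
      linear_combination key
    · intro i
      show (((Units.mk0 (a i.succ) (hne _) * (u * Units.mk0 (a' i.succ) (hne' _))⁻¹ : Lˣ) : L))⁻¹ * a i.succ = (u : L) * a' i.succ
      have hv : (((Units.mk0 (a i.succ) (hne _) * (u * Units.mk0 (a' i.succ) (hne' _))⁻¹ : Lˣ) : L)) = a i.succ * ((u : L) * a' i.succ)⁻¹ := by simp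
      rw [hv]
      field_simp
      simp [hne i.succ]
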